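/- In the nef-partition setting, let σ* ⊆ Δ* be a proper face with σ̌ nonempty. Then σ̌_i* = {m ∈ Δ_i | ⟨m,n⟩ = -φ_i(n) for all n ∈ σ*}, i.e., σ̌_i* consists exactly of the points of Δ_i realizing the value of -φ_i on the cone over σ*. -/

import Mathlib

open scoped Pointwise

namespace BB

abbrev V (n : ℕ) : Type := Fin n → ℝ

/-- The standard pairing between `M_ℝ` and `N_ℝ` (both identified with `ℝⁿ`). -/
def pair {n : ℕ} (m v : V n) : ℝ := ∑ i, m i * v i

/-- A point of `ℝⁿ` is a lattice point if all its coordinates are integers. -/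
def IsLatticePt {n : ℕ} (m : V n) : Prop := ∀ i, ∃ z : ℤ, m i = (z : ℝ)

/-- A lattice polytope: convex hull of finitely many lattice points. -/
def IsLatticePolytope {n : ℕ} (P : Set (V n)) : Prop :=
  ∃ S : Finset (V n), (∀ m ∈ S, IsLatticePt m) ∧ P = convexHull ℝ (S : Set (V n))

/-- The polar dual `P* = {v | ⟨m,v⟩ ≥ -1 for all m ∈ P}`. -/
def polar {n : ℕ} (P : Set (V n)) : Set (V n) := {v | ∀ m ∈ P, -1 ≤ pair m v}

/-- A reflexive polytope: a lattice polytope with `0` in its interior whose polar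
dual is again a lattice polytope. -/
def IsReflexive {n : ℕ} (P : Set (V n)) : Prop :=
  IsLatticePolytope P ∧ (0 : V n) ∈ interior P ∧ IsLatticePolytope (polar P)

/-- The support function `supp P v = -inf{⟨m,v⟩ | m ∈ P}`; for `P = Δᵢ` and `v ∈ N_ℝ`
this is the piecewise linear function `φᵢ(v)` of the nef-partition. -/
noncomputable def supp {n : ℕ} (P : Set (V n)) (v : V n) : ℝ :=
  sSup ((fun m => -(pair m v)) '' P)

end BB


namespace BB

/-- `F` is a face of the convex set `P` (an exposed subset). -/
def IsFaceOf {n : ℕ} (F P : Set (V n)) : Prop := IsExposed ℝ P F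

variable {n : ℕ}

lemma pair_comm (a b : V n) : pair a b = pair b a :=
  Finset.sum_congr rfl fun _ _ => mul_comm _ _

lemma pair_add_left (a b v : V n) : pair (a + b) v = pair a v + pair b v := by
  simp [pair, add_mul, Finset.sum_add_distrib]

lemma pair_add_right (m a b : V n) : pair m (a + b) = pair m a + pair m b := by
  simp [pair, mul_add, Finset.sum_add_distrib]

lemma pair_smul_left (t : ℝ) (a v : V n) : pair (t • a) v = t * pair a v := by
  simp [pair, Finset.mul_sum, mul_assoc]

lemma pair_smul_right (t : ℝ) (m v : V n) : pair m (t • v) = t * pair m v := by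
  simp only [pair, Finset.mul_sum, Pi.smul_apply, smul_eq_mul]
  exact Finset.sum_congr rfl fun _ _ => by ring

lemma pair_zero_left (v : V n) : pair 0 v = 0 := by simp [pair]

lemma pair_zero_right (m : V n) : pair m 0 = 0 := by simp [pair]

lemma pair_sum_left {ι : Type*} (s : Finset ι) (f : ι → V n) (v : V n) :
    pair (∑ j ∈ s, f j) v = ∑ j ∈ s, pair (f j) v := by
  classical
  induction s using Finset.cons_induction with
  | empty => simp [pair]
  | cons j s hj ih => rw [Finset.sum_cons, Finset.sum_cons, pair_add_left, ih]

lemma pair_sum_smul (s : Finset (V n)) (w : V n → ℝ) (v : V n) :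
    pair (∑ e ∈ s, w e • e) v = ∑ e ∈ s, w e * pair e v := by
  rw [pair_sum_left]; exact Finset.sum_congr rfl fun e _ => pair_smul_left _ _ _

lemma pair_self_pos {v : V n} (hv : v ≠ 0) : 0 < pair v v := by
  have h := Function.ne_iff.1 hv
  obtain ⟨i, hi⟩ := h
  refine Finset.sum_pos' (fun j _ => mul_self_nonneg _) ⟨i, Finset.mem_univ i, ?_⟩
  have hvi : v i ≠ 0 := by simpa using hi
  exact mul_self_pos.2 hvi

/-- `c` is the maximum of `m ↦ -⟨m,v⟩` on `P`. -/
def MaxAt (P : Set (V n)) (v : V n) (c : ℝ) : Prop :=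
  (∃ m ∈ P, -(pair m v) = c) ∧ ∀ m ∈ P, -(pair m v) ≤ c

lemma MaxAt.supp_eq {P : Set (V n)} {v : V n} {c : ℝ} (h : MaxAt P v c) : supp P v = c := by
  obtain ⟨⟨m, hm, hmc⟩, hub⟩ := h
  have hbdd : c ∈ upperBounds ((fun m => -(pair m v)) '' P) := by
    rintro x ⟨y, hy, rfl⟩; exact hub y hy
  refine le_antisymm (csSup_le ⟨_, Set.mem_image_of_mem _ hm⟩ fun x hx => hbdd hx) ?_
  exact hmc ▸ le_csSup ⟨c, hbdd⟩ (Set.mem_image_of_mem _ hm)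

lemma MaxAt.le {P : Set (V n)} {v : V n} {c : ℝ} (h : MaxAt P v c) {m : V n} (hm : m ∈ P) :
    -c ≤ pair m v := by
  have := h.2 m hm; linarith

lemma maxAt_convexHull (S : Finset (V n)) (hS : S.Nonempty) (v : V n) :
    MaxAt (convexHull ℝ (S : Set (V n))) v (S.sup' hS fun m => -(pair m v)) := by
  constructor
  · obtain ⟨m, hm, hmax⟩ := S.exists_mem_eq_sup' hS fun m => -(pair m v)
    exact ⟨m, subset_convexHull ℝ _ hm, hmax.symm⟩
  · intro m hm
    have hconv : Convex ℝ {x : V n | -(pair x v) ≤ S.sup' hS fun m => -(pair m v)} := by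
      intro x hx y hy a b ha hb hab
      simp only [Set.mem_setOf_eq] at hx hy ⊢
      rw [pair_add_left, pair_smul_left, pair_smul_left]
      have h1 := mul_le_mul_of_nonneg_left hx ha
      have h2 := mul_le_mul_of_nonneg_left hy hb
      have h3 : a * (S.sup' hS fun m => -(pair m v)) + b * (S.sup' hS fun m => -(pair m v))
          = S.sup' hS fun m => -(pair m v) := by rw [← add_mul, hab, one_mul]
      linarith
    have hsub := convexHull_min (s := (S : Set (V n)))
      (t := {x : V n | -(pair x v) ≤ S.sup' hS fun m => -(pair m v)})
      (fun x hx => Finset.le_sup' (fun m => -(pair m v)) hx) hconv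
    exact hsub hm

lemma MaxAt.add {A B : Set (V n)} {v : V n} {a b : ℝ} (hA : MaxAt A v a) (hB : MaxAt B v b) :
    MaxAt (A + B) v (a + b) := by
  obtain ⟨⟨x, hx, hxa⟩, hubA⟩ := hA
  obtain ⟨⟨y, hy, hyb⟩, hubB⟩ := hB
  constructor
  · exact ⟨x + y, Set.add_mem_add hx hy, by rw [pair_add_left]; linarith⟩
  · intro m hm
    rw [Set.mem_add] at hm
    obtain ⟨p, hp, q, hq, rfl⟩ := hm
    have h1 := hubA p hp; have h2 := hubB q hq
    rw [pair_add_left]; linarith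

lemma maxAt_zero (v : V n) : MaxAt (0 : Set (V n)) v 0 := by
  constructor
  · exact ⟨0, rfl, by rw [pair_zero_left]; ring⟩
  · intro m hm
    rw [Set.mem_zero] at hm
    subst hm; rw [pair_zero_left]; norm_num

lemma maxAt_sum {ι : Type*} (s : Finset ι) (A : ι → Set (V n)) (c : ι → ℝ) (v : V n)
    (h : ∀ j ∈ s, MaxAt (A j) v (c j)) :
    MaxAt (∑ j ∈ s, A j) v (∑ j ∈ s, c j) := by
  classical
  induction s using Finset.cons_induction with
  | empty => simpa using maxAt_zero v
  | cons j s hj ih =>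
    rw [Finset.sum_cons, Finset.sum_cons]
    exact (h j (Finset.mem_cons_self _ _)).add (ih fun k hk => h k (Finset.mem_cons_of_mem hk))

lemma MaxAt.smul {P : Set (V n)} {v : V n} {c : ℝ} (h : MaxAt P v c) {t : ℝ} (ht : 0 ≤ t) :
    MaxAt P (t • v) (t * c) := by
  obtain ⟨⟨m, hm, hmc⟩, hub⟩ := h
  constructor
  · exact ⟨m, hm, by rw [pair_smul_right]; rw [← hmc]; ring⟩
  · intro x hx
    have := hub x hx
    rw [pair_smul_right]
    nlinarith

lemma mem_setSum {ι : Type*} (s : Finset ι) (A : ι → Set (V n)) (x : V n) :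
    x ∈ ∑ j ∈ s, A j ↔ ∃ f : ι → V n, (∀ j ∈ s, f j ∈ A j) ∧ ∑ j ∈ s, f j = x := by
  classical
  induction s using Finset.cons_induction generalizing x with
  | empty =>
    simp only [Finset.sum_empty, Finset.notMem_empty, false_implies, implies_true, true_and]
    constructor
    · intro hx; rw [Set.mem_zero] at hx; exact ⟨fun _ => 0, hx.symm⟩
    · rintro ⟨f, rfl⟩; exact Set.zero_mem_zero
  | cons j s hj ih =>
    rw [Finset.sum_cons, Set.mem_add]
    constructor
    · rintro ⟨a, ha, b, hb, rfl⟩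
      obtain ⟨f, hf, hsum⟩ := (ih b).1 hb
      refine ⟨Function.update f j a, ?_, ?_⟩
      · intro k hk
        by_cases hkj : k = j
        · subst hkj; rw [Function.update_self]; exact ha
        · rw [Function.update_of_ne hkj]
          exact hf k ((Finset.mem_cons.1 hk).resolve_left hkj)
      · rw [Finset.sum_cons, Function.update_self]
        congr 1
        rw [← hsum]
        refine Finset.sum_congr rfl fun k hk => ?_
        rw [Function.update_of_ne (by rintro rfl; exact hj hk)]
    · rintro ⟨f, hf, rfl⟩
      rw [Finset.sum_cons]
      exact ⟨f j, hf j (Finset.mem_cons_self _ _), ∑ k ∈ s, f k,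
        (ih _).2 ⟨f, fun k hk => hf k (Finset.mem_cons_of_mem hk), rfl⟩, rfl⟩

lemma single_mem_setSum {r : ℕ} (A : Fin r → Set (V n)) (h0 : ∀ l, 0 ∈ A l)
    {i : Fin r} {a : V n} (ha : a ∈ A i) : a ∈ ∑ l, A l := by
  classical
  refine (mem_setSum _ _ _).2 ⟨fun l => if l = i then a else 0, fun l _ => ?_, ?_⟩
  · by_cases h : l = i
    · subst h; simpa using ha
    · simpa [h] using h0 l
  · simp

lemma pair_mem_setSum {r : ℕ} (A : Fin r → Set (V n)) (h0 : ∀ l, 0 ∈ A l)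
    {i j : Fin r} (hij : i ≠ j) {a b : V n} (ha : a ∈ A i) (hb : b ∈ A j) :
    a + b ∈ ∑ l, A l := by
  classical
  refine (mem_setSum _ _ _).2
    ⟨fun l => if l = i then a else if l = j then b else 0, fun l _ => ?_, ?_⟩
  · by_cases h : l = i
    · subst h; simpa using ha
    · by_cases h' : l = j
      · subst h'; simpa [h] using hb
      · simpa [h, h'] using h0 l
  · have : ∀ l, (if l = i then a else if l = j then b else 0)
        = (if l = i then a else 0) + (if l = j then b else 0) := by
      intro l
      by_cases h : l = i
      · subst h; simp [hij]
      · by_cases h' : l = j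
        · subst h'; simp [h]
        · simp [h, h']
    rw [Finset.sum_congr rfl fun l _ => this l, Finset.sum_add_distrib]
    simp

lemma pair_ge_of_mem_convexHull {c : ℝ} {A : Set (V n)} {m x : V n}
    (hx : x ∈ convexHull ℝ A) (h : ∀ a ∈ A, c ≤ pair m a) : c ≤ pair m x := by
  have hconv : Convex ℝ {y : V n | c ≤ pair m y} := by
    intro p hp q hq a b ha hb hab
    simp only [Set.mem_setOf_eq] at hp hq ⊢
    rw [pair_add_right, pair_smul_right, pair_smul_right]
    have h1 := mul_le_mul_of_nonneg_left hp ha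
    have h2 := mul_le_mul_of_nonneg_left hq hb
    have h3 : a * c + b * c = c := by rw [← add_mul, hab, one_mul]
    linarith
  exact convexHull_min h hconv hx

lemma mem_of_forall_pair {P : Set (V n)} (hP : IsClosed P) (hc : Convex ℝ P) {m : V n}
    (h : ∀ v : V n, ∃ x ∈ P, pair x v ≤ pair m v) : m ∈ P := by
  by_contra hm
  obtain ⟨f, u, hfm, hfP⟩ := geometric_hahn_banach_point_closed hc hP hm
  classical
  set w : V n := fun i => f (fun j => if i = j then (1 : ℝ) else 0) with hw
  have hfv : ∀ x : V n, f x = pair x w := by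
    intro x
    conv_lhs => rw [pi_eq_sum_univ x]
    rw [map_sum]
    refine Finset.sum_congr rfl fun i _ => ?_
    rw [f.map_smul, smul_eq_mul, hw]
  obtain ⟨x, hx, hle⟩ := h w
  have h1 := hfP x hx
  rw [hfv x, hfv m] at *
  linarith

end BB

namespace BB2helpers
end BB2helpers

namespace BB
variable {n : ℕ}

lemma pair_sum_right {ι : Type*} (s : Finset ι) (m : V n) (f : ι → V n) :
    pair m (∑ j ∈ s, f j) = ∑ j ∈ s, pair m (f j) := by
  rw [pair_comm, pair_sum_left]
  exact Finset.sum_congr rfl fun j _ => pair_comm _ _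

lemma pair_sum_smul_right (s : Finset (V n)) (w : V n → ℝ) (m : V n) :
    pair m (∑ e ∈ s, w e • e) = ∑ e ∈ s, w e * pair m e := by
  rw [pair_comm, pair_sum_smul]
  exact Finset.sum_congr rfl fun e _ => by rw [pair_comm]

lemma sum_smul_mem_convexHull {s : Finset (V n)} {wt : V n → ℝ} {A : Set (V n)}
    (h0 : ∀ e ∈ s, 0 ≤ wt e) (h1 : ∑ e ∈ s, wt e = 1)
    (hA : ∀ e ∈ s, wt e ≠ 0 → e ∈ A) :
    (∑ e ∈ s, wt e • e) ∈ convexHull ℝ A := by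
  classical
  set s' := s.filter (fun e => wt e ≠ 0) with hs'
  have hsum : ∑ e ∈ s', wt e • e = ∑ e ∈ s, wt e • e :=
    Finset.sum_filter_of_ne fun e _ hne h0' => hne (by rw [h0', zero_smul])
  have hsum1 : ∑ e ∈ s', wt e = 1 := by
    rw [← h1]
    exact Finset.sum_filter_of_ne fun e _ hne => hne
  have hmem := Finset.centerMass_mem_convexHull s'
    (fun e he => h0 e (Finset.mem_of_mem_filter e he))
    (by rw [hsum1]; norm_num)
    (fun e he => hA e (Finset.mem_of_mem_filter e he) (Finset.mem_filter.1 he).2)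
  rw [Finset.centerMass_eq_of_sum_1 _ (fun e => e) hsum1] at hmem
  rw [← hsum]
  exact hmem

theorem stmt4 {n r : ℕ} (Δ : Set (V n)) (D : Fin r → Set (V n))
    (hΔrefl : IsReflexive Δ)
    (hDlat : ∀ i, IsLatticePolytope (D i))
    (hΔ : Δ = ∑ i, D i)
    (E : Finset (V n))
    (hE : (E : Set (V n)) = Set.extremePoints ℝ (polar Δ))
    (hnef : ∀ i, ∀ e ∈ E, supp (D i) e = 0 ∨ supp (D i) e = 1)
    (Nb : Fin r → Set (V n))
    (hNb : ∀ i, Nb i = convexHull ℝ ({0} ∪ {e : V n | e ∈ E ∧ supp (D i) e = 1}))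
    -- a proper face σ* of Δ*
    (σs : Set (V n))
    (hface : IsFaceOf σs (polar Δ))
    (hproper : σs ≠ polar Δ)
    -- σ̌ = σ₁* + ⋯ + σ_r*, assumed nonempty
    (chk : Set (V n))
    (hchkdef : chk = ∑ i, {v ∈ σs | supp (D i) v = 1})
    (hchkne : chk.Nonempty)
    -- σ̌* = {m ∈ ∇* | ⟨m,n⟩ = -1 for all n ∈ σ̌}
    (chks : Set (V n))
    (hchks : chks = {m ∈ polar (∑ i, Nb i) | ∀ v ∈ chk, pair m v = -1}) :
    -- σ̌ᵢ* consists exactly of the points of Δᵢ realizing -φᵢ on the cone over σ*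
    ∀ i, {m ∈ chks | supp (Nb i) m = 1}
      = {m ∈ D i | ∀ v ∈ σs, pair m v = -(supp (D i) v)} := by
  intro i
  classical
  obtain ⟨⟨SΔ, hSΔlat, hSΔ⟩, hint, ⟨T, hTlat, hT⟩⟩ := hΔrefl
  have h0Δ : (0 : V n) ∈ Δ := interior_subset hint
  choose S hSlat hS using hDlat
  -- nonemptiness of the pieces
  have h0sum : (0 : V n) ∈ ∑ j, D j := hΔ ▸ h0Δ
  obtain ⟨f0, hf0, hf0sum⟩ := (mem_setSum Finset.univ D 0).1 h0sum
  have hDne : ∀ j, (D j).Nonempty := fun j => ⟨f0 j, hf0 j (Finset.mem_univ j)⟩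
  have hSne : ∀ j, (S j).Nonempty := by
    intro j
    rcases (S j).eq_empty_or_nonempty with h | h
    · exfalso; obtain ⟨x, hx⟩ := hDne j; rw [hS j, h] at hx; simp at hx
    · exact h
  have hSΔne : SΔ.Nonempty := by
    rcases SΔ.eq_empty_or_nonempty with h | h
    · exfalso; rw [hSΔ, h] at h0Δ; simp at h0Δ
    · exact h
  -- maximum facts
  have hmaxD : ∀ j v, MaxAt (D j) v (supp (D j) v) := by
    intro j v
    have h := maxAt_convexHull (S j) (hSne j) v
    rw [← hS j] at h
    rw [h.supp_eq]; exact h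
  have hmaxΔ : ∀ v, MaxAt Δ v (supp Δ v) := by
    intro v
    have h := maxAt_convexHull SΔ hSΔne v
    rw [← hSΔ] at h
    rw [h.supp_eq]; exact h
  have hsupp_add : ∀ v, supp Δ v = ∑ j, supp (D j) v := by
    intro v
    have h := maxAt_sum Finset.univ D (fun j => supp (D j) v) v (fun j _ => hmaxD j v)
    rw [← hΔ] at h
    exact h.supp_eq
  -- polar characterization
  have hpolar_iff : ∀ v, v ∈ polar Δ ↔ supp Δ v ≤ 1 := by
    intro v
    constructor
    · intro hv
      obtain ⟨⟨m, hm, hmc⟩, _⟩ := hmaxΔ v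
      have := hv m hm; linarith
    · intro hv m hm
      have := (hmaxΔ v).2 m hm; linarith
  have hsuppΔ_nonneg : ∀ v, 0 ≤ supp Δ v := by
    intro v
    have := (hmaxΔ v).2 0 h0Δ
    rw [pair_zero_left] at this
    linarith
  obtain ⟨ε, hε, hball⟩ : ∃ ε > 0, Metric.ball (0 : V n) ε ⊆ Δ :=
    Metric.mem_nhds_iff.1 (mem_interior_iff_mem_nhds.1 hint)
  have hsuppΔ_pos : ∀ v : V n, v ≠ 0 → 0 < supp Δ v := by
    intro v hv
    have hvnorm : 0 < ‖v‖ := norm_pos_iff.2 hv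
    set m0 : V n := (-(ε/2) * ‖v‖⁻¹) • v with hm0
    have hm0mem : m0 ∈ Δ := by
      apply hball
      rw [Metric.mem_ball, dist_zero_right, hm0, norm_smul, Real.norm_eq_abs, abs_mul, abs_neg,
        abs_of_pos (by positivity : (0:ℝ) < ε/2), abs_inv, abs_norm, mul_assoc,
        inv_mul_cancel₀ hvnorm.ne', mul_one]
      linarith
    have hub := (hmaxΔ v).2 m0 hm0mem
    rw [hm0, pair_smul_left] at hub
    have hpv := pair_self_pos hv
    have : 0 < ε/2 * ‖v‖⁻¹ * pair v v := by positivity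
    nlinarith
  -- polar Δ basics
  have hPolarCompact : IsCompact (polar Δ) := by
    rw [hT]; exact T.finite_toSet.isCompact_convexHull (𝕜 := ℝ)
  have hPolarClosed : IsClosed (polar Δ) := hPolarCompact.isClosed
  have hPolarConvex : Convex ℝ (polar Δ) := by
    rw [hT]; exact convex_convexHull ℝ _
  have hEsub : (E : Set (V n)) ⊆ polar Δ := by rw [hE]; exact extremePoints_subset
  have hconvE : convexHull ℝ (E : Set (V n)) = polar Δ := by
    have h := closure_convexHull_extremePoints hPolarCompact hPolarConvex
    rw [← hE] at h
    rwa [IsClosed.closure_eq ((E.finite_toSet.isCompact_convexHull (𝕜 := ℝ)).isClosed)] at h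
  -- the distinguished chk point
  obtain ⟨x0, hx0⟩ := hchkne
  have hx0' := hx0
  rw [hchkdef] at hx0'
  obtain ⟨w, hwmem, hwsum⟩ := (mem_setSum Finset.univ _ x0).1 hx0'
  have hwσ : ∀ l, w l ∈ σs := fun l => (hwmem l (Finset.mem_univ l)).1
  have hwφ : ∀ l, supp (D l) (w l) = 1 := fun l => (hwmem l (Finset.mem_univ l)).2
  have hσne : σs.Nonempty := ⟨w i, hwσ i⟩
  have hσsub : σs ⊆ polar Δ := hface.subset
  -- n = 0 is impossible
  by_cases hn : n = 0
  · exfalso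
    apply hproper
    subst hn
    have hss : ∀ a b : V 0, a = b := fun a b => funext fun j => j.elim0
    apply Set.eq_of_subset_of_subset hσsub
    intro y _
    rw [hss y (w i)]
    exact hwσ i
  have hn1 : 0 < n := Nat.pos_of_ne_zero hn
  -- vertices lie on the boundary: supp Δ e = 1
  have hφE : ∀ e ∈ E, supp Δ e = 1 := by
    intro e he
    have heP : e ∈ polar Δ := hEsub he
    have hle : supp Δ e ≤ 1 := (hpolar_iff e).1 heP
    by_contra hne1
    have hext : e ∈ Set.extremePoints ℝ (polar Δ) := by rw [← hE]; exact he
    rcases eq_or_ne e 0 with rfl | he0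
    · -- 0 cannot be an extreme point
      set u0 : V n := fun j => if j = ⟨0, hn1⟩ then 1 else 0 with hu0
      have hu0ne : u0 ≠ 0 := by
        intro h
        have := congrFun h ⟨0, hn1⟩
        simp [hu0] at this
      set c : ℝ := max (supp Δ u0) (supp Δ (-u0)) with hc
      have hc0 : 0 < c := lt_max_of_lt_left (hsuppΔ_pos u0 hu0ne)
      set u : V n := c⁻¹ • u0 with hu
      have hmemaux : ∀ z : V n, supp Δ z ≤ c → c⁻¹ • z ∈ polar Δ := by
        intro z hz
        rw [hpolar_iff]
        have heq : supp Δ (c⁻¹ • z) = c⁻¹ * supp Δ z :=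
          ((hmaxΔ z).smul (inv_nonneg.2 hc0.le)).supp_eq
        rw [heq]
        rw [inv_mul_le_iff₀ hc0, mul_one]
        exact hz
      have huP : u ∈ polar Δ := hmemaux u0 (le_max_left _ _)
      have hnuP : -u ∈ polar Δ := by
        have : -u = c⁻¹ • (-u0) := by rw [hu, smul_neg]
        rw [this]
        exact hmemaux (-u0) (le_max_right _ _)
      have hseg : (0 : V n) ∈ openSegment ℝ u (-u) := by
        refine ⟨1/2, 1/2, by norm_num, by norm_num, by norm_num, ?_⟩
        rw [smul_neg, add_neg_cancel]
      have h := (mem_extremePoints.1 hext).2 u huP (-u) hnuP hseg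
      have hu0' : u = 0 := h.1
      rw [hu, smul_eq_zero] at hu0'
      rcases hu0' with h' | h'
      · exact (inv_ne_zero hc0.ne') h'
      · exact hu0ne h'
    · have hpos : 0 < supp Δ e := hsuppΔ_pos e he0
      have hlt : supp Δ e < 1 := lt_of_le_of_ne hle hne1
      set t := supp Δ e with htt
      set x2 : V n := t⁻¹ • e with hx2
      have hx2P : x2 ∈ polar Δ := by
        rw [hpolar_iff, hx2]
        have heq : supp Δ (t⁻¹ • e) = t⁻¹ * supp Δ e :=
          ((hmaxΔ e).smul (inv_nonneg.2 hpos.le)).supp_eq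
        rw [heq, ← htt, inv_mul_cancel₀ hpos.ne']
      have h0P : (0 : V n) ∈ polar Δ := by
        intro m _
        rw [pair_zero_right]; norm_num
      have hseg : e ∈ openSegment ℝ (0 : V n) x2 := by
        refine ⟨1 - t, t, by linarith, hpos, by ring, ?_⟩
        rw [hx2, smul_zero, zero_add, smul_smul, mul_inv_cancel₀ hpos.ne', one_smul]
      have h := (mem_extremePoints.1 hext).2 0 h0P x2 hx2P hseg
      exact he0 h.1.symm
  -- nef-partition facts on the vertices
  have hφnn : ∀ j, ∀ e ∈ E, 0 ≤ supp (D j) e := by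
    intro j e he
    rcases hnef j e he with h | h <;> rw [h] <;> norm_num
  have hφle1 : ∀ j, ∀ e ∈ E, supp (D j) e ≤ 1 := by
    intro j e he
    rcases hnef j e he with h | h <;> rw [h] <;> norm_num
  have hφ01 : ∀ e ∈ E, ∑ j, supp (D j) e = 1 := fun e he => by
    rw [← hsupp_add]; exact hφE e he
  have hφuniq : ∀ e ∈ E, ∀ j k, supp (D j) e = 1 → supp (D k) e = 1 → j = k := by
    intro e he j k hj hk
    by_contra hjk
    have h2 : (2:ℝ) ≤ ∑ l, supp (D l) e := by
      have hsub : ({j, k} : Finset (Fin r)) ⊆ Finset.univ := Finset.subset_univ _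
      have h := Finset.sum_le_sum_of_subset_of_nonneg hsub fun l _ _ => hφnn l e he
      rw [Finset.sum_pair hjk, hj, hk] at h
      linarith
    rw [hφ01 e he] at h2
    linarith
  have hexu : ∀ e ∈ E, ∃ j, supp (D j) e = 1 := by
    intro e he
    have h : ∑ j, supp (D j) e ≠ 0 := by rw [hφ01 e he]; norm_num
    obtain ⟨j, _, hj⟩ := Finset.exists_ne_zero_of_sum_ne_zero h
    exact ⟨j, (hnef j e he).resolve_left hj⟩
  -- linearity of each supp (D j) on convex combinations of vertices on the boundary
  have hlin : ∀ F : Finset (V n), F ⊆ E → ∀ wt : V n → ℝ,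
      (∀ e ∈ F, 0 ≤ wt e) → ∑ e ∈ F, wt e = 1 →
      ∀ v, (∑ e ∈ F, wt e • e) = v → supp Δ v = 1 →
      ∀ j, supp (D j) v = ∑ e ∈ F, wt e * supp (D j) e := by
    intro F hFE wt hwt0 hwt1 v hv hφv
    have hub : ∀ j, supp (D j) v ≤ ∑ e ∈ F, wt e * supp (D j) e := by
      intro j
      obtain ⟨⟨m, hm, hmc⟩, _⟩ := hmaxD j v
      calc supp (D j) v = -(pair m v) := hmc.symm
        _ = ∑ e ∈ F, wt e * (-(pair m e)) := by
            rw [← hv, pair_sum_smul_right, ← Finset.sum_neg_distrib]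
            exact Finset.sum_congr rfl fun e _ => by ring
        _ ≤ ∑ e ∈ F, wt e * supp (D j) e :=
            Finset.sum_le_sum fun e he =>
              mul_le_mul_of_nonneg_left ((hmaxD j e).2 m hm) (hwt0 e he)
    have haux : ∀ e ∈ F, ∑ j, wt e * supp (D j) e = wt e := fun e he => by
      rw [← Finset.mul_sum, hφ01 e (hFE he), mul_one]
    have h1 : ∑ j, ∑ e ∈ F, wt e * supp (D j) e = 1 := by
      rw [Finset.sum_comm, Finset.sum_congr rfl haux, hwt1]
    have h2 : ∑ j, supp (D j) v = 1 := by rw [← hsupp_add]; exact hφv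
    exact fun j =>
      (Finset.sum_eq_sum_iff_of_le fun j _ => hub j).1 (h2.trans h1.symm) j (Finset.mem_univ j)
  -- every point of a proper face is on the boundary
  have hφσ : ∀ v ∈ σs, supp Δ v = 1 := by
    intro v hv
    have h1 : supp Δ v ≤ 1 := (hpolar_iff v).1 (hσsub hv)
    by_contra hne1
    have hlt : supp Δ v < 1 := lt_of_le_of_ne h1 hne1
    have hvint : v ∈ interior (polar Δ) := by
      refine mem_interior.2 ⟨{u : V n | ∀ m ∈ SΔ, -(pair m u) < 1}, ?_, ?_, ?_⟩
      · intro u hu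
        rw [hpolar_iff]
        have heq : supp Δ u = SΔ.sup' hSΔne fun m => -(pair m u) := by
          have h := maxAt_convexHull SΔ hSΔne u
          rw [← hSΔ] at h
          exact h.supp_eq
        rw [heq]
        exact le_of_lt ((Finset.sup'_lt_iff hSΔne).2 fun m hm => hu m hm)
      · have : {u : V n | ∀ m ∈ SΔ, -(pair m u) < 1} = ⋂ m ∈ SΔ, {u | -(pair m u) < 1} := by
          ext u; simp
        rw [this]
        refine isOpen_biInter_finset fun m _ => ?_
        have hcont : Continuous fun u : V n => -(pair m u) := by
          apply Continuous.neg
          exact continuous_finset_sum _ fun k _ => continuous_const.mul (continuous_apply k)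
        exact isOpen_lt hcont continuous_const
      · intro m hm
        have hmΔ : m ∈ Δ := by rw [hSΔ]; exact subset_convexHull ℝ _ hm
        have := (hmaxΔ v).2 m hmΔ
        linarith
    obtain ⟨l, hl⟩ := hface hσne
    have hvσ := hv
    rw [hl] at hvσ
    obtain ⟨hvP, hvmax⟩ := hvσ
    have hconst : ∀ z ∈ polar Δ, l v ≤ l z := by
      intro z hz
      rcases eq_or_ne v z with rfl | hvz
      · exact le_refl _
      obtain ⟨δ, hδ, hδball⟩ := Metric.mem_nhds_iff.1 (mem_interior_iff_mem_nhds.1 hvint)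
      have hvznorm : 0 < ‖v - z‖ := by rw [norm_pos_iff]; exact sub_ne_zero.2 hvz
      set t : ℝ := δ / (2 * ‖v - z‖) with htdef
      have ht : 0 < t := by positivity
      have hp : v + t • (v - z) ∈ polar Δ := by
        apply hδball
        rw [Metric.mem_ball, dist_eq_norm, add_sub_cancel_left, norm_smul, Real.norm_eq_abs,
          abs_of_pos ht]
        have : t * ‖v - z‖ = δ / 2 := by
          rw [htdef]; field_simp
        rw [this]
        linarith
      have hple := hvmax _ hp
      rw [map_add, map_smul, map_sub, smul_eq_mul] at hple
      have hts : t * (l v - l z) ≤ 0 := by linarith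
      by_contra hgt
      push_neg at hgt
      nlinarith
    apply hproper
    ext y
    constructor
    · intro hy; exact hσsub hy
    · intro hy
      rw [hl]
      exact ⟨hy, fun z hz => (hvmax z hz).trans (hconst y hy)⟩
  -- the face is the hull of its vertices
  have hσcomp : IsCompact σs :=
    hPolarCompact.of_isClosed_subset (hface.isClosed hPolarClosed) hσsub
  have hσconv : Convex ℝ σs := hface.convex hPolarConvex
  set Fσ : Finset (V n) := E.filter (fun e => e ∈ σs) with hFσ
  have hFσE : Fσ ⊆ E := Finset.filter_subset _ _
  have hFσσ : ∀ e ∈ Fσ, e ∈ σs := fun e he => (Finset.mem_filter.1 he).2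
  have hFσcoe : (Fσ : Set (V n)) = σs.extremePoints ℝ := by
    rw [(hface.isExtreme).extremePoints_eq, ← hE]
    ext x
    simp only [hFσ, Finset.coe_filter, Set.mem_setOf_eq, Set.mem_inter_iff, Finset.mem_coe]
    tauto
  have hσhull : σs = convexHull ℝ (Fσ : Set (V n)) := by
    have h := closure_convexHull_extremePoints hσcomp hσconv
    rw [← hFσcoe] at h
    rw [IsClosed.closure_eq ((Fσ.finite_toSet.isCompact_convexHull (𝕜 := ℝ)).isClosed)] at h
    exact h.symm
  -- convex representations
  have hrepσ : ∀ v ∈ σs, ∃ wt : V n → ℝ,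
      (∀ e ∈ Fσ, 0 ≤ wt e) ∧ ∑ e ∈ Fσ, wt e = 1 ∧ ∑ e ∈ Fσ, wt e • e = v := by
    intro v hv
    rw [hσhull, Finset.convexHull_eq] at hv
    obtain ⟨wt, h0, h1, hc⟩ := hv
    refine ⟨wt, h0, h1, ?_⟩
    rw [← hc, Finset.centerMass_eq_of_sum_1 _ id h1]
    simp only [id_eq]
  have hrepP : ∀ v ∈ polar Δ, ∃ wt : V n → ℝ,
      (∀ e ∈ E, 0 ≤ wt e) ∧ ∑ e ∈ E, wt e = 1 ∧ ∑ e ∈ E, wt e • e = v := by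
    intro v hv
    rw [← hconvE, Finset.convexHull_eq] at hv
    obtain ⟨wt, h0, h1, hc⟩ := hv
    refine ⟨wt, h0, h1, ?_⟩
    rw [← hc, Finset.centerMass_eq_of_sum_1 _ id h1]
    simp only [id_eq]
  -- supp (D j) is nonnegative on the face, and the values form a delta pattern
  have hφσnn : ∀ v ∈ σs, ∀ j, 0 ≤ supp (D j) v := by
    intro v hv j
    obtain ⟨wt, h0, h1, hsum⟩ := hrepσ v hv
    rw [hlin Fσ hFσE wt h0 h1 v hsum (hφσ v hv) j]
    exact Finset.sum_nonneg fun e he => mul_nonneg (h0 e he) (hφnn j e (hFσE he))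
  have hφδ : ∀ v ∈ σs, ∀ j, supp (D j) v = 1 → ∀ k, k ≠ j → supp (D k) v = 0 := by
    intro v hv j hj k hkj
    have hsum1 : ∑ l, supp (D l) v = 1 := by rw [← hsupp_add]; exact hφσ v hv
    have hsplit : ∑ l ∈ Finset.univ.erase j, supp (D l) v + supp (D j) v
        = ∑ l, supp (D l) v := Finset.sum_erase_add _ _ (Finset.mem_univ j)
    have herase : ∑ l ∈ Finset.univ.erase j, supp (D l) v = 0 := by
      rw [hj] at hsplit
      linarith
    have hk : supp (D k) v ≤ 0 := by
      have h := Finset.single_le_sum (f := fun l => supp (D l) v)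
        (fun l _ => hφσnn v hv l) (Finset.mem_erase.2 ⟨hkj, Finset.mem_univ k⟩)
      rw [herase] at h
      exact h
    exact le_antisymm hk (hφσnn v hv k)
  -- the generators of Nb
  set G : Fin r → Finset (V n) := fun j => insert 0 (E.filter fun e => supp (D j) e = 1)
    with hG
  have hGne : ∀ j, (G j).Nonempty := fun j => ⟨0, Finset.mem_insert_self _ _⟩
  have hNbG : ∀ j, Nb j = convexHull ℝ ((G j : Set (V n))) := by
    intro j
    rw [hNb j]
    congr 1
    ext x
    simp only [hG, Finset.coe_insert, Set.mem_insert_iff, Finset.mem_coe, Finset.mem_filter,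
      Set.mem_union, Set.mem_singleton_iff, Set.mem_setOf_eq]
  have h0Nb : ∀ j, (0 : V n) ∈ Nb j := fun j => by
    rw [hNbG j]
    exact subset_convexHull ℝ _ (by simp [hG])
  have hENb : ∀ j, ∀ e ∈ E, supp (D j) e = 1 → e ∈ Nb j := by
    intro j e he h1
    rw [hNbG j]
    refine subset_convexHull ℝ _ ?_
    simp only [hG, Finset.coe_insert, Set.mem_insert_iff, Finset.mem_coe, Finset.mem_filter]
    exact Or.inr ⟨he, h1⟩
  have hsupNb : ∀ m, supp (Nb i) m = (G i).sup' (hGne i) fun x => -(pair x m) := by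
    intro m
    have h := maxAt_convexHull (G i) (hGne i) m
    rw [← hNbG i] at h
    exact h.supp_eq
  -- refined representation on the pieces of the face
  have hσjrep : ∀ j, ∀ v ∈ σs, supp (D j) v = 1 →
      ∃ wt : V n → ℝ, (∀ e ∈ Fσ, 0 ≤ wt e) ∧ (∀ e ∈ Fσ, wt e ≠ 0 → supp (D j) e = 1)
        ∧ ∑ e ∈ Fσ, wt e = 1 ∧ ∑ e ∈ Fσ, wt e • e = v := by
    intro j v hv h1
    obtain ⟨wt, h0, hs1, hsum⟩ := hrepσ v hv
    have hlz := hlin Fσ hFσE wt h0 hs1 v hsum (hφσ v hv) j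
    have hz : ∑ e ∈ Fσ, wt e * (1 - supp (D j) e) = 0 := by
      have hexp : ∀ e ∈ Fσ, wt e * (1 - supp (D j) e)
          = wt e - wt e * supp (D j) e := fun e _ => by ring
      rw [Finset.sum_congr rfl hexp, Finset.sum_sub_distrib, hs1, ← hlz, h1]
      ring
    have hterm := (Finset.sum_eq_zero_iff_of_nonneg fun e he =>
      mul_nonneg (h0 e he) (by linarith [hφle1 j e (hFσE he)])).1 hz
    refine ⟨wt, h0, ?_, hs1, hsum⟩
    intro e he hne
    have h := hterm e he
    rcases mul_eq_zero.1 h with h' | h'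
    · exact absurd h' hne
    · linarith
  have hσNb : ∀ j, ∀ v ∈ σs, supp (D j) v = 1 → v ∈ Nb j := by
    intro j v hv h1
    obtain ⟨wt, h0, hsupp1, hs1, hsum⟩ := hσjrep j v hv h1
    rw [hNbG j, ← hsum]
    refine sum_smul_mem_convexHull h0 hs1 ?_
    intro e he hne
    simp only [hG, Finset.coe_insert, Set.mem_insert_iff, Finset.mem_coe, Finset.mem_filter]
    exact Or.inr ⟨hFσE he, hsupp1 e he hne⟩
  -- D i is cut out by the vertex inequalities
  have hDclosed : IsClosed (D i) := by
    rw [hS i]; exact ((S i).finite_toSet.isCompact_convexHull (𝕜 := ℝ)).isClosed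
  have hDconv : Convex ℝ (D i) := by rw [hS i]; exact convex_convexHull ℝ _
  have hsuppD0 : supp (D i) 0 = 0 := by
    obtain ⟨⟨m0, _, hm0⟩, _⟩ := hmaxD i 0
    rw [pair_zero_right] at hm0
    linarith
  have hmemD : ∀ m : V n, (∀ e ∈ E, -(supp (D i) e) ≤ pair m e) → m ∈ D i := by
    intro m hAll
    apply mem_of_forall_pair hDclosed hDconv
    intro v
    obtain ⟨⟨x, hx, hxc⟩, _⟩ := hmaxD i v
    refine ⟨x, hx, ?_⟩
    have hxv : pair x v = -(supp (D i) v) := by linarith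
    rw [hxv]
    rcases eq_or_ne v 0 with rfl | hv0
    · rw [pair_zero_right, hsuppD0]
      norm_num
    · set t := supp Δ v with htdef
      have htpos : 0 < t := hsuppΔ_pos v hv0
      set u : V n := t⁻¹ • v with hudef
      have hut : t • u = v := by
        rw [hudef, smul_smul, mul_inv_cancel₀ htpos.ne', one_smul]
      have hsuppu : supp Δ u = 1 := by
        have h := ((hmaxΔ v).smul (inv_nonneg.2 htpos.le)).supp_eq
        rw [hudef, h, ← htdef, inv_mul_cancel₀ htpos.ne']
      have huP : u ∈ polar Δ := (hpolar_iff u).2 (le_of_eq hsuppu)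
      obtain ⟨wt, hw0, hw1, hwsumu⟩ := hrepP u huP
      have hl := hlin E (subset_refl E) wt hw0 hw1 u hwsumu hsuppu i
      have hpmu : -(supp (D i) u) ≤ pair m u := by
        rw [hl, ← hwsumu, pair_sum_smul_right, ← Finset.sum_neg_distrib]
        apply Finset.sum_le_sum
        intro e he
        have h1 := mul_le_mul_of_nonneg_left (hAll e he) (hw0 e he)
        have : -(wt e * supp (D i) e) = wt e * -(supp (D i) e) := by ring
        linarith
      have hsvt : supp (D i) v = t * supp (D i) u := by
        rw [← hut]
        exact ((hmaxD i u).smul htpos.le).supp_eq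
      have hpvt : pair m v = t * pair m u := by rw [← hut, pair_smul_right]
      rw [hsvt, hpvt]
      have := mul_le_mul_of_nonneg_left hpmu htpos.le
      linarith
  -- the main equivalence
  ext m
  simp only [Set.mem_setOf_eq, hchks]
  constructor
  · rintro ⟨⟨hmP, hmchk⟩, hsuppNb⟩
    -- extract a vertex e* = g of E_i with ⟨m, g⟩ = -1
    obtain ⟨g, hg, hgeq⟩ := (G i).exists_mem_eq_sup' (hGne i) fun x => -(pair x m)
    have hgval : -(pair g m) = 1 := by rw [← hgeq, ← hsupNb, hsuppNb]
    have hg0 : g ≠ 0 := by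
      intro h
      rw [h, pair_zero_left] at hgval
      norm_num at hgval
    have hgE : g ∈ E ∧ supp (D i) g = 1 := by
      rcases Finset.mem_insert.1 hg with h | h
      · exact absurd h hg0
      · exact ⟨Finset.mem_of_mem_filter g h, (Finset.mem_filter.1 h).2⟩
    have hpairg : pair m g = -1 := by rw [pair_comm]; linarith
    have hgNb : g ∈ Nb i := hENb i g hgE.1 hgE.2
    -- values of m on the w l
    have hcsum : ∑ l, pair m (w l) = -1 := by
      rw [← pair_sum_right, hwsum]
      exact hmchk x0 hx0
    have hwNb : ∀ l, w l ∈ Nb l := fun l => hσNb l (w l) (hwσ l) (hwφ l)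
    have hbound : ∀ l, l ≠ i → 0 ≤ pair m (w l) := by
      intro l hl
      have hmem : w l + g ∈ ∑ l', Nb l' := pair_mem_setSum Nb h0Nb hl (hwNb l) hgNb
      have h := hmP _ hmem
      rw [pair_comm, pair_add_right, hpairg] at h
      linarith
    have hci : -1 ≤ pair m (w i) := by
      have hmem : w i ∈ ∑ l', Nb l' := single_mem_setSum Nb h0Nb (hwNb i)
      have h := hmP _ hmem
      rwa [pair_comm] at h
    have hrest : ∑ l ∈ Finset.univ.erase i, pair m (w l) = 0 := by
      have hsplit : ∑ l ∈ Finset.univ.erase i, pair m (w l) + pair m (w i)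
          = ∑ l, pair m (w l) := Finset.sum_erase_add _ _ (Finset.mem_univ i)
      have hle : (0:ℝ) ≤ ∑ l ∈ Finset.univ.erase i, pair m (w l) :=
        Finset.sum_nonneg fun l hlmem => hbound l (Finset.ne_of_mem_erase hlmem)
      have hge : ∑ l ∈ Finset.univ.erase i, pair m (w l) ≤ 0 := by
        rw [hcsum] at hsplit
        linarith
      linarith
    have hcvals : ∀ l, l ≠ i → pair m (w l) = 0 := by
      intro l hl
      have hle := Finset.single_le_sum (f := fun l => pair m (w l))
        (fun k hk => hbound k (Finset.ne_of_mem_erase hk))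
        (Finset.mem_erase.2 ⟨hl, Finset.mem_univ l⟩)
      rw [hrest] at hle
      exact le_antisymm hle (hbound l hl)
    have hcival : pair m (w i) = -1 := by
      have hsplit : ∑ l ∈ Finset.univ.erase i, pair m (w l) + pair m (w i)
          = ∑ l, pair m (w l) := Finset.sum_erase_add _ _ (Finset.mem_univ i)
      rw [hrest, hcsum] at hsplit
      linarith
    -- value of m on each σ_j^*
    have hσval : ∀ j, ∀ v ∈ σs, supp (D j) v = 1 →
        pair m v = if j = i then (-1:ℝ) else 0 := by
      intro j v hv h1
      have hmemchk : (v + ∑ l ∈ Finset.univ.erase j, w l) ∈ chk := by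
        rw [hchkdef]
        refine (mem_setSum _ _ _).2 ⟨Function.update w j v, ?_, ?_⟩
        · intro l _
          by_cases hlj : l = j
          · subst hlj; rw [Function.update_self]; exact ⟨hv, h1⟩
          · rw [Function.update_of_ne hlj]; exact ⟨hwσ l, hwφ l⟩
        · rw [Finset.sum_update_of_mem (Finset.mem_univ j), Finset.sdiff_singleton_eq_erase]
      have h2 := hmchk _ hmemchk
      rw [pair_add_right, pair_sum_right] at h2
      have h3 : ∑ l ∈ Finset.univ.erase j, pair m (w l) + pair m (w j)
          = ∑ l, pair m (w l) := Finset.sum_erase_add _ _ (Finset.mem_univ j)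
      have h4 : pair m v = pair m (w j) := by
        rw [hcsum] at h3
        linarith
      by_cases hji : j = i
      · rw [if_pos hji, h4, hji]; exact hcival
      · rw [if_neg hji, h4]; exact hcvals j hji
    -- m ∈ D i
    have hAll : ∀ e ∈ E, -(supp (D i) e) ≤ pair m e := by
      intro e he
      obtain ⟨j, hj⟩ := hexu e he
      by_cases hji : j = i
      · subst hji
        rw [hj]
        have hmem : e ∈ ∑ l', Nb l' := single_mem_setSum Nb h0Nb (hENb j e he hj)
        have h := hmP _ hmem
        rwa [pair_comm] at h
      · have hφie : supp (D i) e = 0 := by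
          rcases hnef i e he with h | h
          · exact h
          · exact absurd (hφuniq e he i j h hj) fun hh => hji hh.symm
        rw [hφie, neg_zero]
        have hmem : e + g ∈ ∑ l', Nb l' :=
          pair_mem_setSum Nb h0Nb hji (hENb j e he hj) hgNb
        have h := hmP _ hmem
        rw [pair_comm, pair_add_right, hpairg] at h
        linarith
    refine ⟨hmemD m hAll, ?_⟩
    intro v hv
    obtain ⟨wt, hw0, hw1, hwsum'⟩ := hrepσ v hv
    have hlv := hlin Fσ hFσE wt hw0 hw1 v hwsum' (hφσ v hv) i
    rw [hlv, ← hwsum', pair_sum_smul_right, ← Finset.sum_neg_distrib]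
    apply Finset.sum_congr rfl
    intro e he
    have heσ : e ∈ σs := hFσσ e he
    have heE : e ∈ E := hFσE he
    obtain ⟨j, hj⟩ := hexu e heE
    have hval := hσval j e heσ hj
    by_cases hji : j = i
    · subst hji
      rw [if_pos rfl] at hval
      rw [hval, hj]
      ring
    · have hφie : supp (D i) e = 0 := by
        rcases hnef i e heE with h | h
        · exact h
        · exact absurd (hφuniq e heE i j h hj) fun hh => hji hh.symm
      rw [if_neg hji] at hval
      rw [hval, hφie]
      ring
  · rintro ⟨hmD, hval⟩
    have hpairD : ∀ e ∈ E, -(supp (D i) e) ≤ pair m e := fun e _ => (hmaxD i e).le hmD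
    refine ⟨⟨?_, ?_⟩, ?_⟩
    · -- m ∈ polar (∑ Nb)
      intro x hx
      obtain ⟨f, hf, rfl⟩ := (mem_setSum _ _ _).1 hx
      rw [pair_sum_left]
      have hterm : ∀ l, (if l = i then (-1:ℝ) else 0) ≤ pair (f l) m := by
        intro l
        rw [pair_comm]
        have hfl : f l ∈ convexHull ℝ ((G l : Set (V n))) := by
          rw [← hNbG l]; exact hf l (Finset.mem_univ l)
        apply pair_ge_of_mem_convexHull hfl
        intro a ha
        rw [Finset.mem_coe] at ha
        rcases Finset.mem_insert.1 ha with rfl | ha'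
        · rw [pair_zero_right]
          split_ifs <;> norm_num
        · have haE := Finset.mem_of_mem_filter a ha'
          have haφ := (Finset.mem_filter.1 ha').2
          have h := hpairD a haE
          by_cases hli : l = i
          · rw [if_pos hli]
            rw [← hli, haφ] at h
            linarith
          · rw [if_neg hli]
            have hφia : supp (D i) a = 0 := by
              rcases hnef i a haE with h' | h'
              · exact h'
              · exact absurd (hφuniq a haE i l h' haφ) fun hh => hli hh.symm
            rw [hφia] at h
            linarith
      have hsum := Finset.sum_le_sum fun l (_ : l ∈ Finset.univ) => hterm l
      have hone : ∑ l, (if l = i then (-1:ℝ) else 0) = -1 := Fintype.sum_ite_eq' i fun _ => (-1:ℝ)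
      rw [hone] at hsum
      exact hsum
    · -- pair m v = -1 on chk
      intro v hv
      rw [hchkdef] at hv
      obtain ⟨f, hf, rfl⟩ := (mem_setSum _ _ _).1 hv
      rw [pair_sum_right]
      have hterm : ∀ l, pair m (f l) = if l = i then (-1:ℝ) else 0 := by
        intro l
        have hfσ : f l ∈ σs := (hf l (Finset.mem_univ l)).1
        have hfφ : supp (D l) (f l) = 1 := (hf l (Finset.mem_univ l)).2
        rw [hval (f l) hfσ]
        by_cases hli : l = i
        · rw [if_pos hli, ← hli, hfφ]
        · rw [if_neg hli, hφδ (f l) hfσ l hfφ i fun h => hli h.symm]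
          norm_num
      rw [Finset.sum_congr rfl fun l _ => hterm l]
      exact Fintype.sum_ite_eq' i fun _ => (-1:ℝ)
    · -- supp (Nb i) m = 1
      rw [hsupNb m]
      apply le_antisymm
      · apply Finset.sup'_le
        intro a ha
        rcases Finset.mem_insert.1 ha with rfl | ha'
        · rw [pair_zero_left]; norm_num
        · have haE := Finset.mem_of_mem_filter a ha'
          have haφ := (Finset.mem_filter.1 ha').2
          have h := hpairD a haE
          rw [haφ] at h
          rw [pair_comm]
          linarith
      · have hpwi : pair m (w i) = -1 := by rw [hval (w i) (hwσ i), hwφ i]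
        obtain ⟨wt, hw0, hsupp1, hs1, hsum⟩ := hσjrep i (w i) (hwσ i) (hwφ i)
        have h1 : ∑ e ∈ Fσ, wt e * pair m e = -1 := by
          rw [← pair_sum_smul_right, hsum]
          exact hpwi
        have hz : ∑ e ∈ Fσ, wt e * (pair m e + 1) = 0 := by
          have hexp : ∀ e ∈ Fσ, wt e * (pair m e + 1)
              = wt e * pair m e + wt e := fun e _ => by ring
          rw [Finset.sum_congr rfl hexp, Finset.sum_add_distrib, h1, hs1]
          ring
        have hnn : ∀ e ∈ Fσ, 0 ≤ wt e * (pair m e + 1) := by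
          intro e he
          have h := hpairD e (hFσE he)
          have hle1 := hφle1 i e (hFσE he)
          exact mul_nonneg (hw0 e he) (by linarith)
        have hterms := (Finset.sum_eq_zero_iff_of_nonneg hnn).1 hz
        have hs1ne : ∑ e ∈ Fσ, wt e ≠ 0 := by rw [hs1]; norm_num
        obtain ⟨e0, he0mem, he0ne⟩ := Finset.exists_ne_zero_of_sum_ne_zero hs1ne
        have he0φ : supp (D i) e0 = 1 := hsupp1 e0 he0mem he0ne
        have he0pair : pair m e0 = -1 := by
          have h := hterms e0 he0mem
          rcases mul_eq_zero.1 h with h' | h'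
          · exact absurd h' he0ne
          · linarith
        have he0G : e0 ∈ G i :=
          Finset.mem_insert_of_mem (Finset.mem_filter.2 ⟨hFσE he0mem, he0φ⟩)
        have hval0 : (1:ℝ) = -(pair e0 m) := by rw [pair_comm]; linarith
        rw [hval0]
        exact Finset.le_sup' (fun x => -(pair x m)) he0G

end BB
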